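/- (Proposition 2, necessity, N qubits) Let N ≥ 2, n ≥ 1, λ : Fin n → ℝ with λ_i > 0 and ∑_i λ_i = 1, and let p : Fin n → Fin N → EuclideanSpace ℝ (Fin 3) be unit vectors. Let ρ = ∑_i λ_i M_i where M_i f g = ∏_α ρ_{p i α} (f α) (g α). Fix α ≠ β in Fin N and let π be the transposition swapping α and β. If P_π * ρ = ρ, then p i α = p i β for every i. Consequently, if P_π ρ = ρ for all transpositions π, then for each i the vectors p i α are equal for all α, i.e. all N qubits in each term of the decomposition carry the same polarization vector. -/

import Mathlib

open Matrix

/-- The Bloch matrix `ρ_p = (1/2)(I + p₁σx + p₂σy + p₃σz)` of a vector `p ∈ ℝ³`. -/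
noncomputable def blochMat (p : EuclideanSpace ℝ (Fin 3)) : Matrix (Fin 2) (Fin 2) ℂ :=
  (1 / 2 : ℂ) • ((1 : Matrix (Fin 2) (Fin 2) ℂ)
    + (p 0 : ℂ) • !![0, 1; 1, 0]
    + (p 1 : ℂ) • !![0, -Complex.I; Complex.I, 0]
    + (p 2 : ℂ) • !![1, 0; 0, -1])

/-- The N-fold Kronecker product of the Bloch matrices of `p α`, `α : Fin N`, as an
N-qubit matrix indexed by `Fin N → Fin 2`. -/
noncomputable def prodState {N : ℕ} (p : Fin N → EuclideanSpace ℝ (Fin 3)) :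
    Matrix (Fin N → Fin 2) (Fin N → Fin 2) ℂ :=
  Matrix.of fun f g => ∏ α, blochMat (p α) (f α) (g α)

/-- The permutation operator `P_π` on N qubits: its `(f, g)` entry is `1` if
`f = g ∘ π⁻¹` and `0` otherwise. -/
def permOp (N : ℕ) (π : Equiv.Perm (Fin N)) :
    Matrix (Fin N → Fin 2) (Fin N → Fin 2) ℂ :=
  Matrix.of fun f g => if f = g ∘ ⇑π⁻¹ then 1 else 0


lemma blochMat_trace (u : EuclideanSpace ℝ (Fin 3)) : trace (blochMat u) = 1 := by
  simp [blochMat, trace, Fin.sum_univ_succ, Matrix.one_apply]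
  ring

/-- The dot product of two Bloch vectors. -/
def dotp (u v : EuclideanSpace ℝ (Fin 3)) : ℝ :=
  u 0 * v 0 + u 1 * v 1 + u 2 * v 2

lemma blochMat_mul_trace (u v : EuclideanSpace ℝ (Fin 3)) :
    trace (blochMat u * blochMat v)
      = (((1 + dotp u v) / 2 : ℝ) : ℂ) := by
  rw [dotp]
  simp [blochMat, trace, Matrix.mul_apply, Fin.sum_univ_succ, Matrix.one_apply]
  ring_nf
  simp [Complex.I_sq]
  ring

lemma sum_diag_prod {N : ℕ} (A : Fin N → Matrix (Fin 2) (Fin 2) ℂ)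
    (htr : ∀ γ, trace (A γ) = 1) :
    ∑ f : Fin N → Fin 2, ∏ γ, A γ (f γ) (f γ) = 1 := by
  rw [← Fintype.prod_sum (fun γ (x : Fin 2) => A γ x x)]
  simp only [show ∀ γ, ∑ x, A γ x x = 1 from fun γ => htr γ, Finset.prod_const_one]

lemma sum_swap_prod {N : ℕ} (A : Fin N → Matrix (Fin 2) (Fin 2) ℂ)
    (htr : ∀ γ, trace (A γ) = 1) (α β : Fin N) (hαβ : α ≠ β) :
    ∑ f : Fin N → Fin 2, ∏ γ, A γ (f (Equiv.swap α β γ)) (f γ)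
      = trace (A α * A β) := by
  classical
  set H : Fin 2 → Fin 2 → Fin N → Fin 2 → ℂ := fun a b γ x =>
    if γ = α then (if x = a then (1:ℂ) else 0)
    else if γ = β then (if x = b then 1 else 0)
    else A γ x x with hH
  have hsplit : ∀ (h : Fin N → ℂ), ∏ γ, h γ
      = h α * (h β * ∏ γ ∈ (Finset.univ.erase α).erase β, h γ) := by
    intro h
    rw [Finset.mul_prod_erase _ h (Finset.mem_erase.2 ⟨hαβ.symm, Finset.mem_univ β⟩),
      Finset.mul_prod_erase _ h (Finset.mem_univ α)]
  have hin : ∀ γ ∈ (Finset.univ.erase α).erase β, γ ≠ α ∧ γ ≠ β := by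
    intro γ hγ
    simp only [Finset.mem_erase] at hγ
    exact ⟨hγ.2.1, hγ.1⟩
  have key : ∀ f : Fin N → Fin 2, ∏ γ, A γ (f (Equiv.swap α β γ)) (f γ)
      = ∑ a : Fin 2, ∑ b : Fin 2, (A α b a * A β a b) * ∏ γ, H a b γ (f γ) := by
    intro f
    rw [hsplit]
    simp only [hsplit fun γ => H _ _ γ (f γ)]
    simp only [hH, if_pos rfl, if_neg hαβ.symm]
    rw [Finset.sum_comm]
    rw [Finset.sum_eq_single (f β)]
    · rw [Finset.sum_eq_single (f α)]
      · have : ∀ γ ∈ (Finset.univ.erase α).erase β,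
            (if γ = α then (if f γ = f α then (1:ℂ) else 0)
              else if γ = β then (if f γ = f β then 1 else 0)
              else A γ (f γ) (f γ)) = A γ (f γ) (f γ) := by
          intro γ hγ
          rw [if_neg (hin γ hγ).1, if_neg (hin γ hγ).2]
        rw [Finset.prod_congr rfl this]
        simp only [if_pos rfl]
        simp only [Equiv.swap_apply_left, Equiv.swap_apply_right]
        rw [Finset.prod_congr rfl fun γ hγ => by
          rw [Equiv.swap_apply_of_ne_of_ne (hin γ hγ).1 (hin γ hγ).2]]
        simp only [if_true]
        ring
      · intro a _ ha
        simp [if_neg (Ne.symm ha)]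
      · simp
    · intro b _ hb
      rw [Finset.sum_eq_zero]
      intro a _
      simp [if_neg (Ne.symm hb)]
    · simp
  calc ∑ f : Fin N → Fin 2, ∏ γ, A γ (f (Equiv.swap α β γ)) (f γ)
      = ∑ f : Fin N → Fin 2, ∑ a : Fin 2, ∑ b : Fin 2,
          (A α b a * A β a b) * ∏ γ, H a b γ (f γ) := by
        exact Finset.sum_congr rfl fun f _ => key f
    _ = ∑ a : Fin 2, ∑ b : Fin 2, ∑ f : Fin N → Fin 2,
          (A α b a * A β a b) * ∏ γ, H a b γ (f γ) := by
        rw [Finset.sum_comm]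
        exact Finset.sum_congr rfl fun a _ => Finset.sum_comm
    _ = ∑ a : Fin 2, ∑ b : Fin 2, (A α b a * A β a b) * ∏ γ, (∑ x, H a b γ x) := by
        refine Finset.sum_congr rfl fun a _ => Finset.sum_congr rfl fun b _ => ?_
        rw [← Finset.mul_sum, ← Fintype.prod_sum (H a b)]
    _ = ∑ a : Fin 2, ∑ b : Fin 2, (A α b a * A β a b) := by
        refine Finset.sum_congr rfl fun a _ => Finset.sum_congr rfl fun b _ => ?_
        have : ∀ γ, (∑ x, H a b γ x) = 1 := by
          intro γ
          by_cases h1 : γ = α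
          · simp [hH, h1]
          · by_cases h2 : γ = β
            · simp [hH, h1, h2]
            · simp only [hH, if_neg h1, if_neg h2]
              exact htr γ
        simp [this]
    _ = trace (A α * A β) := by
        simp only [trace, Matrix.mul_apply, diag_apply]
        rw [Finset.sum_comm]


lemma permOp_mul_apply {N : ℕ} (π : Equiv.Perm (Fin N))
    (M : Matrix (Fin N → Fin 2) (Fin N → Fin 2) ℂ) (f g : Fin N → Fin 2) :
    (permOp N π * M) f g = M (f ∘ ⇑π) g := by
  classical
  rw [Matrix.mul_apply]
  rw [Finset.sum_eq_single (f ∘ ⇑π)]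
  · simp only [permOp, Matrix.of_apply]
    rw [if_pos (by funext x; simp), one_mul]
  · intro h _ hne
    rw [show (permOp N π) f h = 0 from ?_, zero_mul]
    simp only [permOp, Matrix.of_apply]
    rw [if_neg]
    intro heq
    apply hne
    funext x
    rw [heq]
    simp
  · simp

lemma dot_le_one (u v : EuclideanSpace ℝ (Fin 3)) (hu : ‖u‖ = 1) (hv : ‖v‖ = 1) :
    dotp u v ≤ 1 := by
  rw [dotp]
  have h := real_inner_le_norm u v
  rw [hu, hv, one_mul] at h
  rw [PiLp.inner_apply, Fin.sum_univ_three] at h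
  simp only [RCLike.inner_apply, conj_trivial] at h
  linarith
  
lemma dot_eq_one (u v : EuclideanSpace ℝ (Fin 3)) (hu : ‖u‖ = 1) (hv : ‖v‖ = 1)
    (h : dotp u v = 1) : u = v := by
  rw [dotp] at h
  rw [← inner_eq_one_iff_of_norm_eq_one (𝕜 := ℝ) hu hv]
  rw [PiLp.inner_apply, Fin.sum_univ_three]
  simp only [RCLike.inner_apply, conj_trivial]
  linarith
theorem permutation_symmetric_implies_identical_factors (N n : ℕ) (hN : 2 ≤ N) (hn : 1 ≤ n)
    (lam : Fin n → ℝ) (hpos : ∀ i, 0 < lam i) (hsum : ∑ i, lam i = 1)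
    (p : Fin n → Fin N → EuclideanSpace ℝ (Fin 3)) (hunit : ∀ i α, ‖p i α‖ = 1)
    (α β : Fin N) (hαβ : α ≠ β) :
    (permOp N (Equiv.swap α β) * (∑ i, (lam i : ℂ) • prodState (p i))
        = ∑ i, (lam i : ℂ) • prodState (p i) →
      ∀ i, p i α = p i β) ∧
    ((∀ γ δ : Fin N, γ ≠ δ →
        permOp N (Equiv.swap γ δ) * (∑ i, (lam i : ℂ) • prodState (p i))
          = ∑ i, (lam i : ℂ) • prodState (p i)) →
      ∀ i, ∀ γ δ : Fin N, p i γ = p i δ) := by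
  have key : ∀ γ δ : Fin N, γ ≠ δ →
      permOp N (Equiv.swap γ δ) * (∑ i, (lam i : ℂ) • prodState (p i))
        = ∑ i, (lam i : ℂ) • prodState (p i) → ∀ i, p i γ = p i δ := by
    intro γ δ hγδ heq i
    -- trace of the RHS is 1
    have htrB : ∀ j (ε : Fin N), trace (blochMat (p j ε)) = 1 :=
      fun j ε => blochMat_trace _
    have htr1 : trace (∑ j, (lam j : ℂ) • prodState (p j)) = 1 := by
      rw [trace_sum]
      have : ∀ j, trace ((lam j : ℂ) • prodState (p j)) = (lam j : ℂ) := by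
        intro j
        rw [trace_smul]
        have : trace (prodState (p j)) = 1 := by
          simp only [trace, diag_apply, prodState, Matrix.of_apply]
          exact sum_diag_prod (fun ε => blochMat (p j ε)) (htrB j)
        rw [this, smul_eq_mul, mul_one]
      rw [Finset.sum_congr rfl fun j _ => this j]
      rw [← Complex.ofReal_sum, hsum, Complex.ofReal_one]
    -- trace of the LHS
    have htr2 : trace (permOp N (Equiv.swap γ δ) * (∑ j, (lam j : ℂ) • prodState (p j)))
        = ∑ j, (lam j : ℂ) * (((1 + dotp (p j γ) (p j δ)) / 2 : ℝ) : ℂ) := by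
      rw [Matrix.mul_sum, trace_sum]
      refine Finset.sum_congr rfl fun j _ => ?_
      rw [Matrix.mul_smul, trace_smul, smul_eq_mul]
      congr 1
      have : trace (permOp N (Equiv.swap γ δ) * prodState (p j))
          = ∑ f : Fin N → Fin 2, ∏ ε, blochMat (p j ε) (f ((Equiv.swap γ δ) ε)) (f ε) := by
        simp only [trace, diag_apply]
        refine Finset.sum_congr rfl fun f _ => ?_
        rw [permOp_mul_apply]
        simp only [prodState, Matrix.of_apply, Function.comp_apply]
      rw [this, sum_swap_prod (fun ε => blochMat (p j ε)) (htrB j) γ δ hγδ,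
        blochMat_mul_trace]
    -- the real equation
    have hreal : ∑ j, lam j * ((1 + dotp (p j γ) (p j δ)) / 2) = 1 := by
      have h3 : trace (permOp N (Equiv.swap γ δ) * (∑ j, (lam j : ℂ) • prodState (p j)))
          = trace (∑ j, (lam j : ℂ) • prodState (p j)) := by rw [heq]
      rw [htr1, htr2] at h3
      have h4 : ((∑ j, lam j * ((1 + dotp (p j γ) (p j δ)) / 2) : ℝ) : ℂ) = ((1 : ℝ) : ℂ) := by
        rw [Complex.ofReal_sum]
        simp only [Complex.ofReal_mul]
        rw [h3, Complex.ofReal_one]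
      exact_mod_cast h4
    -- nonnegativity argument
    have hle : ∀ j, dotp (p j γ) (p j δ) ≤ 1 := fun j => dot_le_one _ _ (hunit j γ) (hunit j δ)
    have hzero : ∑ j, lam j * ((1 - dotp (p j γ) (p j δ)) / 2) = 0 := by
      have : ∑ j, lam j * ((1 - dotp (p j γ) (p j δ)) / 2) = ∑ j, (lam j - lam j * ((1 + dotp (p j γ) (p j δ)) / 2)) := by
        refine Finset.sum_congr rfl fun j _ => by ring
      rw [this, Finset.sum_sub_distrib, hsum, hreal, sub_self]
    have hnn : ∀ j ∈ Finset.univ, 0 ≤ lam j * ((1 - dotp (p j γ) (p j δ)) / 2) := by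
      intro j _
      exact mul_nonneg (hpos j).le (by linarith [hle j])
    have hall := (Finset.sum_eq_zero_iff_of_nonneg hnn).1 hzero i (Finset.mem_univ i)
    have hdi : dotp (p i γ) (p i δ) = 1 := by
      rcases mul_eq_zero.1 hall with h | h
      · exact absurd h (hpos i).ne'
      · linarith
    exact dot_eq_one _ _ (hunit i γ) (hunit i δ) hdi
  constructor
  · exact key α β hαβ
  · intro hall i γ δ
    by_cases h : γ = δ
    · rw [h]
    · exact key γ δ h (hall γ δ h) i
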